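/- Let $R$ be a commutative ring with a pre-λ structure, with plethystic exponential $\mathrm{Exp}$ and logarithm $\mathrm{Log}$ on $R[[z_1,\ldots,z_n]]^+$. Define $(A(z))^m := \mathrm{Exp}(m \cdot \mathrm{Log}(A(z)))$ for $A(z) \in 1 + R[[z_1,\ldots,z_n]]^+$ and $m \in R$. Then this defines a power structure on $R$: (i) $A^0 = 1$; (ii) $A^1 = A$; (iii) $(AB)^m = A^m B^m$; (iv) $A^{m_1+m_2} = A^{m_1}A^{m_2}$; (v) $A^{m_1 m_2} = (A^{m_2})^{m_1}$; (vi) $(1+\sum_i z_i)^m = 1 + m\sum_i z_i + (\text{terms of total degree} \geq 2)$. -/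

import Mathlib

/-- A pre-λ structure on a commutative ring `A`. -/
structure PreLambda (A : Type*) [CommRing A] where
  toFun : A → PowerSeries A
  map_zero' : toFun 0 = 1
  map_add' : ∀ a b : A, toFun (a + b) = toFun a * toFun b
  coeff_zero' : ∀ a : A, PowerSeries.coeff 0 (toFun a) = 1
  coeff_one' : ∀ a : A, PowerSeries.coeff 1 (toFun a) = a

/-- Substitution of (minus) a monomial `z^r = ∏ z_i^{r i}` into a one-variable power series:
`g(z) ↦ g(-z^r)`, as a multivariate power series.  For `r ≠ 0` the exponent `m` with
`d = m • r` (if any) is unique and bounded by the total degree of `d`. -/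
noncomputable def monSubstNeg {σ : Type*} [DecidableEq σ] {A : Type*} [CommRing A]
    (r : σ →₀ ℕ) (g : PowerSeries A) : MvPowerSeries σ A :=
  fun d => ∑ m ∈ Finset.range (d.sum (fun _ v => v) + 1),
    if d = m • r then (-1 : A) ^ m * PowerSeries.coeff m g else 0

/-- The multivariable plethystic exponential
`Exp (∑_{r ≠ 0} A_r z^r) = ∏_{r ≠ 0} λ⁻¹_{A_r}(-z^r)`.
Since `λ⁻¹_{A_r} = λ_{-A_r}`, and since the factor indexed by `r` contributes to the
coefficient at a multidegree `d` only when `r ≤ d`, the coefficient at `d` equals the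
corresponding coefficient of the finite product over `0 < r ≤ d`. -/
noncomputable def mvExp {σ : Type*} [DecidableEq σ] {A : Type*} [CommRing A]
    (L : PreLambda A) (f : MvPowerSeries σ A) : MvPowerSeries σ A :=
  fun d => MvPowerSeries.coeff d
    (∏ r ∈ (Finset.Iic d).erase 0, monSubstNeg r (L.toFun (-(MvPowerSeries.coeff r f))))


namespace PowerStructAux

open MvPowerSeries Finset

variable {σ : Type*} [DecidableEq σ] {A : Type*} [CommRing A]

lemma eq_of_smul_eq {r : σ →₀ ℕ} (hr : r ≠ 0) {m m' : ℕ} (h : m • r = m' • r) : m = m' := by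
  obtain ⟨x, hx⟩ := Finsupp.ne_iff.mp hr
  have hx' : 0 < r x := Nat.pos_of_ne_zero (by simpa using hx)
  have := congrArg (fun f : σ →₀ ℕ => f x) h
  simp only [Finsupp.smul_apply, smul_eq_mul] at this
  exact Nat.eq_of_mul_eq_mul_right hx' this

lemma le_smul {r : σ →₀ ℕ} {m : ℕ} (hm : 0 < m) : r ≤ m • r := by
  rw [Finsupp.le_def]
  intro i
  rw [Finsupp.smul_apply, smul_eq_mul]
  exact Nat.le_mul_of_pos_left _ hm

lemma le_degree {r : σ →₀ ℕ} (hr : r ≠ 0) (m : ℕ) : m ≤ (m • r).sum (fun _ v => v) := by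
  obtain ⟨x, hx⟩ := Finsupp.ne_iff.mp hr
  have hx' : 0 < r x := Nat.pos_of_ne_zero (by simpa using hx)
  rcases Nat.eq_zero_or_pos m with hm | hm
  · simp [hm]
  have hval : (m • r) x = m * r x := by rw [Finsupp.smul_apply, smul_eq_mul]
  have hmem : x ∈ (m • r).support := by
    rw [Finsupp.mem_support_iff, hval]
    exact Nat.mul_ne_zero hm.ne' hx'.ne'
  calc m ≤ m * r x := Nat.le_mul_of_pos_right m hx'
    _ = (m • r) x := hval.symm
    _ ≤ ∑ y ∈ (m • r).support, (m • r) y :=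
        Finset.single_le_sum (fun _ _ => Nat.zero_le _) hmem
    _ = (m • r).sum (fun _ v => v) := rfl

lemma monSubstNeg_smul {r : σ →₀ ℕ} (hr : r ≠ 0) (g : PowerSeries A) (m : ℕ) :
    monSubstNeg r g (m • r) = (-1 : A) ^ m * PowerSeries.coeff m g := by
  unfold monSubstNeg
  rw [Finset.sum_eq_single m]
  · rw [if_pos rfl]
  · intro b _ hb
    exact if_neg (fun h => hb (eq_of_smul_eq hr h).symm)
  · intro hm
    exact absurd (Finset.mem_range.mpr (Nat.lt_succ_of_le (le_degree hr m))) hm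

lemma monSubstNeg_eq_zero {r : σ →₀ ℕ} (g : PowerSeries A) {d : σ →₀ ℕ}
    (h : ∀ m : ℕ, d ≠ m • r) : monSubstNeg r g d = 0 := by
  unfold monSubstNeg
  exact Finset.sum_eq_zero fun m _ => if_neg (h m)

lemma monSubstNeg_zero_coeff (r : σ →₀ ℕ) (g : PowerSeries A) :
    monSubstNeg r g 0 = PowerSeries.coeff 0 g := by
  unfold monSubstNeg
  simp

lemma monSubstNeg_support {r : σ →₀ ℕ} (g : PowerSeries A) {d : σ →₀ ℕ}
    (hd : d ≠ 0) (hrd : ¬ r ≤ d) : monSubstNeg r g d = 0 := by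
  apply monSubstNeg_eq_zero
  intro m h
  rcases Nat.eq_zero_or_pos m with hm | hm
  · exact hd (by simpa [hm] using h)
  · exact hrd (h ▸ le_smul hm)

lemma monSubstNeg_one (r : σ →₀ ℕ) : monSubstNeg r (1 : PowerSeries A) = 1 := by
  funext d
  rcases eq_or_ne d 0 with rfl | hd
  · rw [monSubstNeg_zero_coeff, ← MvPowerSeries.coeff_apply (1 : MvPowerSeries σ A) 0]
    simp
  · show _ = MvPowerSeries.coeff d 1
    rw [MvPowerSeries.coeff_one, if_neg hd]
    unfold monSubstNeg
    apply Finset.sum_eq_zero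
    intro m _
    split_ifs with h
    · rcases Nat.eq_zero_or_pos m with hm | hm
      · exact absurd (by simpa [hm] using h) hd
      · rw [PowerSeries.coeff_one, if_neg hm.ne', mul_zero]
    · rfl

lemma monSubstNeg_mul {r : σ →₀ ℕ} (hr : r ≠ 0) (g h : PowerSeries A) :
    monSubstNeg r (g * h) = monSubstNeg r g * monSubstNeg r h := by
  obtain ⟨x, hx⟩ := Finsupp.ne_iff.mp hr
  have hx' : 0 < r x := Nat.pos_of_ne_zero (by simpa using hx)
  funext d
  have hmul : (monSubstNeg r g * monSubstNeg r h) d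
      = ∑ q ∈ Finset.HasAntidiagonal.antidiagonal d, monSubstNeg r g q.1 * monSubstNeg r h q.2 :=
    MvPowerSeries.coeff_mul d _ _
  by_cases hd : ∃ m : ℕ, d = m • r
  · obtain ⟨m, rfl⟩ := hd
    rw [monSubstNeg_smul hr, hmul, PowerSeries.coeff_mul, Finset.mul_sum]
    have hsub : (Finset.HasAntidiagonal.antidiagonal m).image (fun p => (p.1 • r, p.2 • r))
        ⊆ Finset.HasAntidiagonal.antidiagonal (m • r) := by
      intro q hq
      simp only [Finset.mem_image, Finset.HasAntidiagonal.mem_antidiagonal] at hq ⊢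
      obtain ⟨p, hp, rfl⟩ := hq
      rw [← add_smul, hp]
    have hvanish : ∀ q ∈ Finset.HasAntidiagonal.antidiagonal (m • r),
        q ∉ (Finset.HasAntidiagonal.antidiagonal m).image (fun p => (p.1 • r, p.2 • r)) →
        monSubstNeg r g q.1 * monSubstNeg r h q.2 = 0 := by
      intro q hq hq'
      rw [Finset.HasAntidiagonal.mem_antidiagonal] at hq
      by_cases h1 : ∃ i : ℕ, q.1 = i • r
      · obtain ⟨i, hi⟩ := h1
        have him : i ≤ m := by
          have h1 : q.1 x ≤ (m • r) x := by
            rw [← hq]; exact le_self_add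
          rw [hi] at h1
          simp only [Finsupp.smul_apply, smul_eq_mul] at h1
          exact Nat.le_of_mul_le_mul_right h1 hx'
        have hq2 : q.2 = (m - i) • r := by
          ext y
          have := congrArg (fun f : σ →₀ ℕ => f y) hq
          simp only [Finsupp.add_apply, Finsupp.smul_apply, smul_eq_mul] at this ⊢
          have hi' := congrArg (fun f : σ →₀ ℕ => f y) hi
          simp only [Finsupp.smul_apply, smul_eq_mul] at hi'
          have hle : i * r y ≤ m * r y := Nat.mul_le_mul_right _ him
          have hsm := Nat.sub_mul m i (r y)
          omega
        exfalso
        apply hq'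
        simp only [Finset.mem_image, Finset.HasAntidiagonal.mem_antidiagonal]
        exact ⟨(i, m - i), by omega, by rw [← hi, ← hq2]⟩
      · push_neg at h1
        rw [monSubstNeg_eq_zero g (fun i hi => h1 i hi), zero_mul]
    rw [← Finset.sum_subset hsub hvanish,
      Finset.sum_image (fun p hp p' hp' hpp' => ?inj)]
    case inj =>
      have h1 := eq_of_smul_eq hr (congrArg Prod.fst hpp')
      have h2 := eq_of_smul_eq hr (congrArg Prod.snd hpp')
      exact Prod.ext h1 h2
    apply Finset.sum_congr rfl
    intro p hp
    rw [Finset.HasAntidiagonal.mem_antidiagonal] at hp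
    rw [monSubstNeg_smul hr, monSubstNeg_smul hr, ← hp, pow_add]
    ring
  · push_neg at hd
    rw [monSubstNeg_eq_zero _ hd, hmul]
    symm
    apply Finset.sum_eq_zero
    intro q hq
    rw [Finset.HasAntidiagonal.mem_antidiagonal] at hq
    by_cases h1 : ∃ i : ℕ, q.1 = i • r
    · obtain ⟨i, hi⟩ := h1
      by_cases h2 : ∃ j : ℕ, q.2 = j • r
      · obtain ⟨j, hj⟩ := h2
        exact absurd (by rw [← hq, hi, hj, ← add_smul]) (hd (i + j))
      · push_neg at h2
        rw [monSubstNeg_eq_zero _ fun j hj => h2 j hj, mul_zero]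
    · push_neg at h1
      rw [monSubstNeg_eq_zero _ fun i hi => h1 i hi, zero_mul]

lemma coeff_prod_filter {F : (σ →₀ ℕ) → MvPowerSeries σ A}
    (h0 : ∀ r, F r 0 = 1)
    (hs : ∀ r u, u ≠ 0 → ¬ r ≤ u → F r u = 0)
    (D : σ →₀ ℕ) (S : Finset (σ →₀ ℕ)) :
    ∀ e ≤ D, (∏ r ∈ S, F r) e = (∏ r ∈ S.filter (· ≤ D), F r) e := by
  induction S using Finset.induction_on with
  | empty => intro e _; simp
  | @insert a S ha ih =>
    intro e he
    by_cases haD : a ≤ D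
    · rw [Finset.filter_insert, if_pos haD, Finset.prod_insert ha,
        Finset.prod_insert (fun hmem => ha (Finset.mem_of_mem_filter a hmem))]
      rw [show (F a * ∏ r ∈ S, F r) e = _ from MvPowerSeries.coeff_mul e _ _,
        show (F a * ∏ r ∈ Finset.filter (· ≤ D) S, F r) e = _ from
          MvPowerSeries.coeff_mul e _ _]
      apply Finset.sum_congr rfl
      intro q hq
      rw [Finset.HasAntidiagonal.mem_antidiagonal] at hq
      have hq2 : q.2 ≤ D := le_trans (le_trans le_add_self (le_of_eq hq)) he
      rw [MvPowerSeries.coeff_apply, MvPowerSeries.coeff_apply, ih q.2 hq2]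
      rfl
    · rw [Finset.filter_insert, if_neg haD, Finset.prod_insert ha, ← ih e he]
      rw [show (F a * ∏ r ∈ S, F r) e = _ from MvPowerSeries.coeff_mul e _ _]
      rw [Finset.sum_eq_single ((0 : σ →₀ ℕ), e)]
      · rw [MvPowerSeries.coeff_apply, MvPowerSeries.coeff_apply, h0 a, one_mul]
      · intro q hq hne
        rw [Finset.HasAntidiagonal.mem_antidiagonal] at hq
        have hq1 : q.1 ≠ 0 := by
          intro h
          apply hne
          have h2 : q.2 = e := by rw [← hq, h, zero_add]
          exact Prod.ext h h2
        have hna : ¬ a ≤ q.1 := fun hle =>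
          haD (le_trans hle (le_trans (le_trans le_self_add (le_of_eq hq)) he))
        rw [MvPowerSeries.coeff_apply, hs a q.1 hq1 hna, zero_mul]
      · intro h
        exact absurd (Finset.HasAntidiagonal.mem_antidiagonal.mpr (zero_add e)) h

variable (L : PreLambda A)

lemma mvExp_apply (f : MvPowerSeries σ A) (d : σ →₀ ℕ) :
    mvExp L f d = (∏ r ∈ (Finset.Iic d).erase 0,
      monSubstNeg r (L.toFun (-(MvPowerSeries.coeff r f)))) d := rfl

lemma expF_zero (f : MvPowerSeries σ A) (r : σ →₀ ℕ) :
    monSubstNeg r (L.toFun (-(MvPowerSeries.coeff r f))) 0 = 1 := by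
  rw [monSubstNeg_zero_coeff, L.coeff_zero']

lemma mvExp_coeff (f : MvPowerSeries σ A) {d e : σ →₀ ℕ} (he : e ≤ d) :
    mvExp L f e = (∏ r ∈ (Finset.Iic d).erase 0,
      monSubstNeg r (L.toFun (-(MvPowerSeries.coeff r f)))) e := by
  rw [coeff_prod_filter (fun r => expF_zero L f r)
    (fun r u hu hru => monSubstNeg_support _ hu hru) e ((Finset.Iic d).erase 0) e le_rfl,
    mvExp_apply]
  have hset : ((Finset.Iic d).erase 0).filter (· ≤ e) = (Finset.Iic e).erase 0 := by
    ext r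
    simp only [Finset.mem_filter, Finset.mem_erase, Finset.mem_Iic]
    exact ⟨fun h => ⟨h.1.1, h.2⟩, fun h => ⟨⟨h.1, le_trans h.2 he⟩, h.2⟩⟩
  rw [hset]

lemma mvExp_add (f g : MvPowerSeries σ A) :
    mvExp L (f + g) = mvExp L f * mvExp L g := by
  funext d
  have key : mvExp L (f + g) d =
      ((∏ r ∈ (Finset.Iic d).erase 0, monSubstNeg r (L.toFun (-(MvPowerSeries.coeff r f)))) *
       (∏ r ∈ (Finset.Iic d).erase 0,
          monSubstNeg r (L.toFun (-(MvPowerSeries.coeff r g))))) d := by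
    rw [mvExp_apply, ← Finset.prod_mul_distrib]
    have hprod : ∀ r ∈ (Finset.Iic d).erase 0,
        monSubstNeg r (L.toFun (-(MvPowerSeries.coeff r (f + g))))
          = monSubstNeg r (L.toFun (-(MvPowerSeries.coeff r f))) *
            monSubstNeg r (L.toFun (-(MvPowerSeries.coeff r g))) := by
      intro r hr
      have hr0 : r ≠ 0 := (Finset.mem_erase.mp hr).1
      rw [map_add, neg_add, L.map_add', monSubstNeg_mul hr0]
    rw [Finset.prod_congr rfl hprod]
  rw [key, show ((_ * _ : MvPowerSeries σ A)) d = _ from MvPowerSeries.coeff_mul d _ _,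
    show ((mvExp L f * mvExp L g : MvPowerSeries σ A)) d = _ from MvPowerSeries.coeff_mul d _ _]
  apply Finset.sum_congr rfl
  intro q hq
  rw [Finset.HasAntidiagonal.mem_antidiagonal] at hq
  have hq1 : q.1 ≤ d := le_trans le_self_add (le_of_eq hq)
  have hq2 : q.2 ≤ d := le_trans le_add_self (le_of_eq hq)
  rw [MvPowerSeries.coeff_apply, MvPowerSeries.coeff_apply, MvPowerSeries.coeff_apply,
    MvPowerSeries.coeff_apply, ← mvExp_coeff L f hq1, ← mvExp_coeff L g hq2]

lemma mvExp_zero : mvExp L (0 : MvPowerSeries σ A) = 1 := by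
  funext d
  rw [mvExp_apply]
  have h1 : ∀ r ∈ (Finset.Iic d).erase 0,
      monSubstNeg r (L.toFun (-(MvPowerSeries.coeff r (0 : MvPowerSeries σ A))))
        = (1 : MvPowerSeries σ A) := by
    intro r _
    rw [map_zero, neg_zero, L.map_zero', monSubstNeg_one]
  rw [Finset.prod_congr rfl h1, Finset.prod_const_one]

lemma mvExp_congr {f g : MvPowerSeries σ A}
    (h : ∀ r : σ →₀ ℕ, r ≠ 0 → MvPowerSeries.coeff r f = MvPowerSeries.coeff r g) :
    mvExp L f = mvExp L g := by
  funext d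
  rw [mvExp_apply, mvExp_apply]
  have hprod : ∀ r ∈ (Finset.Iic d).erase 0,
      monSubstNeg r (L.toFun (-(MvPowerSeries.coeff r f)))
        = monSubstNeg r (L.toFun (-(MvPowerSeries.coeff r g))) := by
    intro r hr
    rw [h r (Finset.mem_erase.mp hr).1]
  rw [Finset.prod_congr rfl hprod]

lemma mvExp_const (f : MvPowerSeries σ A) : mvExp L f 0 = 1 := by
  rw [mvExp_apply]
  have h1 : (Finset.Iic (0 : σ →₀ ℕ)).erase 0 = ∅ := by
    ext r
    simp only [Finset.mem_erase, Finset.mem_Iic, Finset.notMem_empty, iff_false, not_and]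
    intro h1 h2
    exact h1 (le_bot_iff.mp h2)
  rw [h1, Finset.prod_empty]
  rw [← MvPowerSeries.coeff_apply (1 : MvPowerSeries σ A) 0]
  simp

lemma mvExp_coeff_single (f : MvPowerSeries σ A) (i : σ) :
    mvExp L f (Finsupp.single i 1) = MvPowerSeries.coeff (Finsupp.single i 1) f := by
  set d : σ →₀ ℕ := Finsupp.single i 1 with hd
  have hd0 : d ≠ 0 := by
    simp [hd, Finsupp.single_eq_zero]
  have hIic : (Finset.Iic d).erase 0 = {d} := by
    ext r
    simp only [Finset.mem_erase, Finset.mem_Iic, Finset.mem_singleton]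
    constructor
    · rintro ⟨hr0, hrd⟩
      obtain ⟨x, hx⟩ := Finsupp.ne_iff.mp hr0
      have hx0 : r x ≠ 0 := by simpa using hx
      have hxi : x = i := by
        by_contra hxi
        have := (Finsupp.le_def.mp hrd) x
        rw [Finsupp.single_apply, if_neg (fun h => hxi h.symm)] at this
        omega
      subst hxi
      have hri : r x ≤ 1 := by
        have := (Finsupp.le_def.mp hrd) x
        rwa [Finsupp.single_apply, if_pos rfl] at this
      ext y
      rcases eq_or_ne y x with rfl | hy
      · rw [Finsupp.single_apply, if_pos rfl]; omega
      · rw [Finsupp.single_apply, if_neg (fun h => hy h.symm)]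
        have := (Finsupp.le_def.mp hrd) y
        rw [Finsupp.single_apply, if_neg (fun h => hy h.symm)] at this
        omega
    · rintro rfl
      exact ⟨hd0, le_rfl⟩
  rw [mvExp_apply, hIic, Finset.prod_singleton]
  have h1 : monSubstNeg d (L.toFun (-(MvPowerSeries.coeff d f))) d
      = MvPowerSeries.coeff d f := by
    have := monSubstNeg_smul (A := A) hd0 (L.toFun (-(MvPowerSeries.coeff d f))) 1
    rw [one_smul] at this
    rw [this, L.coeff_one', pow_one]
    ring
  exact h1

end PowerStructAux

open MvPowerSeries in
/-- The map `(A, m) ↦ A^m := Exp (m • Log A)` is a power structure on a pre-λ-ring `R`: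
(i) `A⁰ = 1`; (ii) `A¹ = A`; (iii) `(AB)^m = A^m B^m`; (iv) `A^{m₁+m₂} = A^{m₁} A^{m₂}`;
(v) `A^{m₁ m₂} = (A^{m₂})^{m₁}`; (vi) `(1 + ∑ᵢ zᵢ)^m = 1 + m ∑ᵢ zᵢ + (degree ≥ 2)`. -/
theorem statement4 {n : ℕ} {R : Type*} [CommRing R] (L : PreLambda R)
    (Log : MvPowerSeries (Fin n) R → MvPowerSeries (Fin n) R)
    (hLog₁ : ∀ f : MvPowerSeries (Fin n) R, constantCoeff f = 0 →
      Log (mvExp L f) = f)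
    (hLog₂ : ∀ g : MvPowerSeries (Fin n) R, constantCoeff g = 1 →
      mvExp L (Log g) = g)
    (pow : MvPowerSeries (Fin n) R → R → MvPowerSeries (Fin n) R)
    (hpow : ∀ A m, pow A m = mvExp L (m • Log A)) :
    (∀ A : MvPowerSeries (Fin n) R, constantCoeff A = 1 → pow A 0 = 1) ∧
    (∀ A : MvPowerSeries (Fin n) R, constantCoeff A = 1 → pow A 1 = A) ∧
    (∀ (A B : MvPowerSeries (Fin n) R) (m : R), constantCoeff A = 1 →
      constantCoeff B = 1 → pow (A * B) m = pow A m * pow B m) ∧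
    (∀ (A : MvPowerSeries (Fin n) R) (m₁ m₂ : R), constantCoeff A = 1 →
      pow A (m₁ + m₂) = pow A m₁ * pow A m₂) ∧
    (∀ (A : MvPowerSeries (Fin n) R) (m₁ m₂ : R), constantCoeff A = 1 →
      pow A (m₁ * m₂) = pow (pow A m₂) m₁) ∧
    (∀ m : R,
      constantCoeff (pow (1 + ∑ i : Fin n, MvPowerSeries.X i) m) = 1 ∧
      ∀ i : Fin n, MvPowerSeries.coeff (Finsupp.single i 1)
        (pow (1 + ∑ i : Fin n, MvPowerSeries.X i) m) = m) := by
  classical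
  have hconst : ∀ f : MvPowerSeries (Fin n) R, constantCoeff (mvExp L f) = 1 := by
    intro f
    rw [← coeff_zero_eq_constantCoeff_apply]
    exact PowerStructAux.mvExp_const L f
  have hLogc : ∀ A : MvPowerSeries (Fin n) R, constantCoeff A = 1 →
      constantCoeff (Log A) = 0 := by
    intro A hA
    have h1 : mvExp L (Log A - MvPowerSeries.C (constantCoeff (Log A)))
        = mvExp L (Log A) :=
      PowerStructAux.mvExp_congr L (fun r hr => by
        rw [map_sub, MvPowerSeries.coeff_C, if_neg hr, sub_zero])
    have h2 : constantCoeff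
        (Log A - MvPowerSeries.C (constantCoeff (Log A))) = 0 := by
      rw [map_sub, constantCoeff_C, sub_self]
    have h3 := hLog₁ _ h2
    rw [h1, hLog₂ A hA] at h3
    have h4 := congrArg (constantCoeff) h3
    rw [h2] at h4
    exact h4
  refine ⟨?_, ?_, ?_, ?_, ?_, ?_⟩
  · intro A hA
    rw [hpow, zero_smul, PowerStructAux.mvExp_zero]
  · intro A hA
    rw [hpow, one_smul, hLog₂ A hA]
  · intro A B m hA hB
    have hAB : Log (A * B) = Log A + Log B := by
      have hc : constantCoeff (Log A + Log B) = 0 := by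
        rw [map_add, hLogc A hA, hLogc B hB, add_zero]
      have h5 := hLog₁ _ hc
      rw [PowerStructAux.mvExp_add, hLog₂ A hA, hLog₂ B hB] at h5
      exact h5
    rw [hpow, hpow, hpow, hAB, smul_add, PowerStructAux.mvExp_add]
  · intro A m₁ m₂ hA
    rw [hpow, hpow, hpow, add_smul, PowerStructAux.mvExp_add]
  · intro A m₁ m₂ hA
    have hc : constantCoeff (m₂ • Log A) = 0 := by
      have h5 : constantCoeff (m₂ • Log A)
          = m₂ • constantCoeff (Log A) := by
        rw [← coeff_zero_eq_constantCoeff_apply, ← coeff_zero_eq_constantCoeff_apply]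
        exact map_smul (MvPowerSeries.coeff 0) m₂ (Log A)
      rw [h5, hLogc A hA, smul_zero]
    rw [hpow, hpow, hpow, hLog₁ _ hc, smul_smul]
  · intro m
    set A₀ : MvPowerSeries (Fin n) R := 1 + ∑ i : Fin n, MvPowerSeries.X i with hA₀
    have hA₀c : constantCoeff A₀ = 1 := by
      rw [hA₀, map_add, map_one, map_sum]
      simp [constantCoeff_X]
    constructor
    · rw [hpow]
      exact hconst _
    · intro i
      have hsm : MvPowerSeries.coeff (Finsupp.single i 1) (m • Log A₀)
          = m * MvPowerSeries.coeff (Finsupp.single i 1) (Log A₀) := by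
        rw [map_smul, smul_eq_mul]
      have hlin : MvPowerSeries.coeff (Finsupp.single i 1) (Log A₀) = 1 := by
        have h5 := PowerStructAux.mvExp_coeff_single L (Log A₀) i
        rw [hLog₂ A₀ hA₀c] at h5
        rw [← h5]
        show MvPowerSeries.coeff (Finsupp.single i 1) A₀ = 1
        rw [hA₀, map_add, MvPowerSeries.coeff_one,
          if_neg (fun h => one_ne_zero (Finsupp.single_eq_zero.mp h)), map_sum,
          Finset.sum_eq_single i]
        · rw [MvPowerSeries.coeff_X, if_pos rfl, zero_add]
        · intro j _ hj
          rw [MvPowerSeries.coeff_X, if_neg]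
          intro h
          exact hj ((Finsupp.single_left_inj one_ne_zero).mp h.symm)
        · intro h
          exact absurd (Finset.mem_univ i) h
      rw [hpow, show MvPowerSeries.coeff (Finsupp.single i 1) (mvExp L (m • Log A₀))
          = mvExp L (m • Log A₀) (Finsupp.single i 1) from rfl,
        PowerStructAux.mvExp_coeff_single, hsm, hlin, mul_one]
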